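/- Let X be a real vector space and let A, B be disjoint nonempty convex subsets of X with cor(A) ≠ ∅. Then there exist a nonzero linear functional f : X → ℝ and a scalar α ∈ ℝ such that f(a) ≤ α ≤ f(b) for all a ∈ A and b ∈ B, and moreover f(a) < α for all a ∈ cor(A). -/

import Mathlib

open Pointwise

/-- Algebraic interior (core) of a set `A` in a real vector space:
`cor A = {x ∈ A | ∀ d, ∃ δ > 0, ∀ λ ∈ [0, δ], x + λ • d ∈ A}`. -/
def cor {X : Type*} [AddCommGroup X] [Module ℝ X] (A : Set X) : Set X :=
  {x | x ∈ A ∧ ∀ d : X, ∃ δ : ℝ, 0 < δ ∧ ∀ lam ∈ Set.Icc (0 : ℝ) δ, x + lam • d ∈ A}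

/-- Relative algebraic interior of `A`: directions are taken in `L(A) = span (A - A)`. -/
def icr {X : Type*} [AddCommGroup X] [Module ℝ X] (A : Set X) : Set X :=
  {x | x ∈ A ∧ ∀ d ∈ Submodule.span ℝ (A - A),
    ∃ δ : ℝ, 0 < δ ∧ ∀ lam ∈ Set.Icc (0 : ℝ) δ, x + lam • d ∈ A}

/-- Vectorial closure of `A`:
`vcl A = {b | ∃ d, ∀ δ > 0, ∃ λ ∈ [0, δ], b + λ • d ∈ A}`. -/
def vcl {X : Type*} [AddCommGroup X] [Module ℝ X] (A : Set X) : Set X :=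
  {b | ∃ d : X, ∀ δ : ℝ, 0 < δ → ∃ lam ∈ Set.Icc (0 : ℝ) δ, b + lam • d ∈ A}

/-- The core convex topology `τ_c`: the topology whose open sets are the unions of
members of `𝔅 = {A | A convex and cor A = A}`; since `𝔅` is a topological basis
(closed under binary intersection, contains `X` and `∅`), this is the topology
generated by `𝔅`. -/
def tauc (X : Type*) [AddCommGroup X] [Module ℝ X] : TopologicalSpace X :=
  TopologicalSpace.generateFrom {A : Set X | Convex ℝ A ∧ cor A = A}

/-- Separation theorem. If `A, B` are disjoint nonempty convex subsets of a
real vector space `X` with `cor A ≠ ∅`, then there are a nonzero linear functional `f`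
and `α ∈ ℝ` with `f a ≤ α ≤ f b` for all `a ∈ A`, `b ∈ B`, and `f a < α` on `cor A`. -/
theorem stmt17 {X : Type*} [AddCommGroup X] [Module ℝ X] {A B : Set X}
    (hA : Convex ℝ A) (hB : Convex ℝ B) (hAne : A.Nonempty) (hBne : B.Nonempty)
    (hdisj : Disjoint A B) (hcor : (cor A).Nonempty) :
    ∃ (f : X →ₗ[ℝ] ℝ) (α : ℝ), f ≠ 0 ∧
      (∀ a ∈ A, f a ≤ α) ∧ (∀ b ∈ B, α ≤ f b) ∧ (∀ a ∈ cor A, f a < α) := by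
  obtain ⟨x₀, hx₀A, hx₀⟩ := hcor
  obtain ⟨b₀, hb₀⟩ := hBne
  set c₀ : X := x₀ - b₀ with hc₀def
  have hc₀ : c₀ ≠ 0 := by
    intro h
    have : x₀ = b₀ := by
      have := sub_eq_zero.mp h; exact this
    exact Set.disjoint_left.mp hdisj hx₀A (this ▸ hb₀)
  -- The translated difference set D
  set D : Set X := (fun y => -c₀ + y) '' (A - B) with hDdef
  have memD : ∀ y, y ∈ D ↔ ∃ a ∈ A, ∃ b ∈ B, y = a - b - c₀ := by
    intro y
    constructor
    · rintro ⟨z, hz, rfl⟩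
      obtain ⟨a, ha, b, hb, rfl⟩ := hz
      exact ⟨a, ha, b, hb, by abel⟩
    · rintro ⟨a, ha, b, hb, rfl⟩
      exact ⟨a - b, Set.sub_mem_sub ha hb, by abel⟩
  have hD : Convex ℝ D := (hA.sub hB).translate (-c₀)
  have h0D : (0 : X) ∈ D := by
    rw [memD]
    exact ⟨x₀, hx₀A, b₀, hb₀, by rw [hc₀def]; abel⟩
  -- small multiples of any direction lie in D
  have hdir : ∀ d : X, ∃ δ : ℝ, 0 < δ ∧ ∀ lam ∈ Set.Icc (0 : ℝ) δ, lam • d ∈ D := by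
    intro d
    obtain ⟨δ, hδ, hmem⟩ := hx₀ d
    refine ⟨δ, hδ, fun lam hlam => ?_⟩
    rw [memD]
    exact ⟨x₀ + lam • d, hmem lam hlam, b₀, hb₀, by rw [hc₀def]; abel⟩
  have habs : Absorbent ℝ D := by
    intro x
    obtain ⟨δ₁, hδ₁, h₁⟩ := hdir x
    obtain ⟨δ₂, hδ₂, h₂⟩ := hdir (-x)
    set δ := min δ₁ δ₂ with hδdef
    have hδ : 0 < δ := lt_min hδ₁ hδ₂
    refine Absorbs.of_norm ⟨δ⁻¹, fun c hc => ?_⟩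
    have hc0 : c ≠ 0 := by
      intro h
      rw [h, norm_zero] at hc
      exact absurd hc (not_le.mpr (inv_pos.mpr hδ))
    intro y hy
    rw [Set.mem_singleton_iff] at hy
    rw [hy]
    rw [Set.mem_smul_set_iff_inv_smul_mem₀ hc0]
    have hinv : |c|⁻¹ ≤ δ := by
      rw [inv_le_comm₀ (abs_pos.mpr hc0) hδ]
      calc δ⁻¹ ≤ ‖c‖ := hc
        _ = |c| := rfl
    rcases lt_or_gt_of_ne hc0 with hneg | hpos
    · have : c⁻¹ • x = (-c⁻¹) • (-x) := by simp
      rw [this]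
      refine h₂ (-c⁻¹) ⟨neg_nonneg.mpr (inv_nonpos.mpr hneg.le), ?_⟩
      have : -c⁻¹ = |c|⁻¹ := by
        rw [abs_of_neg hneg, ← inv_neg]
      rw [this]
      exact le_trans hinv (min_le_right _ _)
    · refine h₁ c⁻¹ ⟨by positivity, ?_⟩
      have : c⁻¹ = |c|⁻¹ := by rw [abs_of_pos hpos]
      rw [this]
      exact le_trans hinv (min_le_left _ _)
  have hnc₀ : -c₀ ∉ D := by
    rw [memD]
    rintro ⟨a, ha, b, hb, hab⟩
    have : a = b := by
      have : a - b = 0 := by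
        have := hab; rw [sub_sub, ← neg_add_eq_sub] at this
        -- -c₀ = a - (b + c₀)
        have h' : a - b - c₀ + c₀ = -c₀ + c₀ := by rw [← hab]
        simpa using h'
      exact sub_eq_zero.mp this
    exact Set.disjoint_left.mp hdisj ha (this ▸ hb)
  have hone : 1 ≤ gauge D (-c₀) :=
    one_le_gauge_of_notMem (hD.starConvex h0D) (habs _) hnc₀
  -- Hahn-Banach extension of t • (-c₀) ↦ t
  have hbound : ∀ x : (LinearPMap.mkSpanSingleton (K := ℝ) (σ := RingHom.id ℝ) (-c₀) (1 : ℝ)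
      (neg_ne_zero.mpr hc₀)).domain, (LinearPMap.mkSpanSingleton (K := ℝ) (σ := RingHom.id ℝ) (-c₀) (1 : ℝ)
      (neg_ne_zero.mpr hc₀)) x ≤ gauge D x := by
    rintro ⟨x, hx⟩
    obtain ⟨t, rfl⟩ := Submodule.mem_span_singleton.mp hx
    have happ : (LinearPMap.mkSpanSingleton (K := ℝ) (σ := RingHom.id ℝ) (-c₀) (1 : ℝ) (neg_ne_zero.mpr hc₀))
        ⟨t • (-c₀), hx⟩ = t • (1 : ℝ) :=
      LinearPMap.mkSpanSingleton'_apply (-c₀) (1 : ℝ) _ t hx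
    rw [happ, smul_eq_mul, mul_one]
    rcases le_or_gt 0 t with ht | ht
    · rw [show ((⟨t • (-c₀), hx⟩ : (LinearPMap.mkSpanSingleton (K := ℝ) (σ := RingHom.id ℝ) (-c₀) (1 : ℝ)
        (neg_ne_zero.mpr hc₀)).domain) : X) = t • (-c₀) from rfl,
        gauge_smul_of_nonneg ht, smul_eq_mul]
      calc t = t * 1 := (mul_one t).symm
        _ ≤ t * gauge D (-c₀) := by nlinarith
    · exact le_trans ht.le (gauge_nonneg _)
  obtain ⟨g, hg_ext, hg_le⟩ := exists_extension_of_le_sublinear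
    (LinearPMap.mkSpanSingleton (K := ℝ) (σ := RingHom.id ℝ) (-c₀) (1 : ℝ) (neg_ne_zero.mpr hc₀)) (gauge D)
    (fun c hc x => by rw [gauge_smul_of_nonneg hc.le, smul_eq_mul])
    (gauge_add_le hD habs) hbound
  have hgc₀ : g (-c₀) = 1 := by
    have h1 := hg_ext ⟨-c₀, Submodule.mem_span_singleton_self _⟩
    rw [LinearPMap.mkSpanSingleton_apply] at h1
    exact h1
  -- key inequality
  have hkey : ∀ a ∈ A, ∀ b ∈ B, g a ≤ g b := by
    intro a ha b hb
    have hmem : a - b - c₀ ∈ D := (memD _).mpr ⟨a, ha, b, hb, rfl⟩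
    have := le_trans (hg_le (a - b - c₀)) (gauge_le_one_of_mem hmem)
    have hexp : g (a - b - c₀) = g a - g b + 1 := by
      rw [map_sub, map_sub, ← hgc₀, map_neg]
      ring
    linarith [hexp ▸ this]
  have hBne' : (g '' B).Nonempty := ⟨g b₀, b₀, hb₀, rfl⟩
  have hbdd : BddBelow (g '' B) := by
    refine ⟨g x₀, ?_⟩
    rintro y ⟨b, hb, rfl⟩
    exact hkey x₀ hx₀A b hb
  refine ⟨g, sInf (g '' B), ?_, ?_, ?_, ?_⟩
  · intro h
    rw [h] at hgc₀
    simpa using hgc₀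
  · intro a ha
    exact le_csInf hBne' (by rintro y ⟨b, hb, rfl⟩; exact hkey a ha b hb)
  · intro b hb
    exact csInf_le hbdd ⟨b, hb, rfl⟩
  · rintro a ⟨haA, hacor⟩
    obtain ⟨δ, hδ, hmem⟩ := hacor (-c₀)
    have hin : a + δ • (-c₀) ∈ A := hmem δ ⟨hδ.le, le_refl δ⟩
    have : g (a + δ • (-c₀)) ≤ sInf (g '' B) :=
      le_csInf hBne' (by rintro y ⟨b, hb, rfl⟩; exact hkey _ hin b hb)
    rw [map_add, map_smul, hgc₀, smul_eq_mul, mul_one] at this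
    linarith
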